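/- Let (αⱼ)_{j∈J} be finitely many complex numbers with Σⱼ |αⱼ|² = 1, let λⱼ, t be real, and suppose that for every pair j ≠ k there is no integer m with (λⱼ − λₖ)t = 2πm (the gaps are nondegenerate modulo 2π). If (1/2)·Σⱼ |αⱼ|⁴ + (1/2)·(1 + Σ_{j≠k} |αⱼ|²|αₖ|² cos((λⱼ−λₖ)t)) = 1, then there exists exactly one index j with αⱼ ≠ 0, i.e. the state Σⱼ αⱼ|λⱼ⟩ is an eigenstate of the Hamiltonian. -/

import Mathlib

open Finset

theorem purity_one_implies_eigenstate {N : ℕ} (α : Fin N → ℂ) (lam : Fin N → ℝ) (t : ℝ)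
    (hnorm : ∑ j, ‖α j‖ ^ 2 = 1)
    (hgap : ∀ j k : Fin N, j ≠ k → ∀ m : ℤ, (lam j - lam k) * t ≠ 2 * Real.pi * m)
    (hpur : (1 / 2) * ∑ j, ‖α j‖ ^ 4
      + (1 / 2) * (1 + ∑ j, ∑ k, if j ≠ k then
          ‖α j‖ ^ 2 * ‖α k‖ ^ 2 *
            Real.cos ((lam j - lam k) * t) else 0) = 1) :
    ∃! j : Fin N, α j ≠ 0 := by
  set p : Fin N → ℝ := fun j => ‖α j‖ ^ 2 with hp
  have hpnn : ∀ j, 0 ≤ p j := fun j => by positivity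
  have hcos : ∀ j k : Fin N, j ≠ k → Real.cos ((lam j - lam k) * t) < 1 := by
    intro j k hjk
    rcases lt_or_eq_of_le (Real.cos_le_one ((lam j - lam k) * t)) with h | h
    · exact h
    · exfalso
      rw [Real.cos_eq_one_iff] at h
      obtain ⟨n, hn⟩ := h
      exact hgap j k hjk n (by linarith)
  have habs4 : ∀ j, ‖α j‖ ^ 4 = p j ^ 2 := by
    intro j; simp only [hp]; ring
  -- S + A = 1
  have hS : ∑ j, ∑ k, (if j ≠ k then
        p j * p k * Real.cos ((lam j - lam k) * t) else 0)
      = 1 - ∑ j, p j ^ 2 := by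
    have := hpur
    simp only [habs4] at this
    linarith
  -- off-diagonal sum of p j * p k equals 1 - ∑ p j ^ 2
  have hT : ∑ j, ∑ k, (if j ≠ k then p j * p k else 0) = 1 - ∑ j, p j ^ 2 := by
    have h1 : (∑ j, p j) ^ 2 = ∑ j, ∑ k, p j * p k := by
      rw [sq, Finset.sum_mul_sum]
    have h2 : ∀ j : Fin N, ∑ k, (if j ≠ k then p j * p k else 0)
        = (∑ k, p j * p k) - p j ^ 2 := by
      intro j
      have h3 : ∑ k, (if j = k then p j * p k else 0) = p j ^ 2 := by
        rw [Finset.sum_ite_eq (Finset.univ : Finset (Fin N)) j (fun k => p j * p k)]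
        simp [sq]
      have h4 : ∀ k : Fin N, (if j ≠ k then p j * p k else 0)
          = p j * p k - (if j = k then p j * p k else 0) := by
        intro k; by_cases hjk : j = k <;> simp [hjk]
      rw [Finset.sum_congr rfl (fun k _ => h4 k), Finset.sum_sub_distrib, h3]
    rw [Finset.sum_congr rfl (fun j _ => h2 j), Finset.sum_sub_distrib, ← h1]
    have : ∑ j, p j = 1 := hnorm
    rw [this]; ring
  -- the vanishing nonnegative sum
  have key : ∑ j, ∑ k, (if j ≠ k then
      p j * p k * (1 - Real.cos ((lam j - lam k) * t)) else 0) = 0 := by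
    have h4 : ∀ j k : Fin N, (if j ≠ k then
        p j * p k * (1 - Real.cos ((lam j - lam k) * t)) else 0)
        = (if j ≠ k then p j * p k else 0)
          - (if j ≠ k then p j * p k * Real.cos ((lam j - lam k) * t) else 0) := by
      intro j k; by_cases hjk : j ≠ k <;> simp [hjk] <;> ring
    calc ∑ j, ∑ k, (if j ≠ k then
          p j * p k * (1 - Real.cos ((lam j - lam k) * t)) else 0)
        = ∑ j, ∑ k, ((if j ≠ k then p j * p k else 0)
          - (if j ≠ k then p j * p k * Real.cos ((lam j - lam k) * t) else 0)) := by
          exact Finset.sum_congr rfl (fun j _ => Finset.sum_congr rfl (fun k _ => h4 j k))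
      _ = 0 := by
          simp only [Finset.sum_sub_distrib]
          rw [hT, hS]; ring
  have hterm : ∀ j k : Fin N, j ≠ k → p j * p k = 0 := by
    intro j k hjk
    have hnn : ∀ j : Fin N, ∀ k : Fin N, 0 ≤ (if j ≠ k then
        p j * p k * (1 - Real.cos ((lam j - lam k) * t)) else 0) := by
      intro j k
      by_cases h : j ≠ k
      · rw [if_pos h]
        have h1 := Real.cos_le_one ((lam j - lam k) * t)
        exact mul_nonneg (mul_nonneg (hpnn j) (hpnn k)) (by linarith)
      · rw [if_neg h]
    have hinner : ∀ j : Fin N, 0 ≤ ∑ k, (if j ≠ k then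
        p j * p k * (1 - Real.cos ((lam j - lam k) * t)) else 0) :=
      fun j => Finset.sum_nonneg (fun k _ => hnn j k)
    have h1 := (Finset.sum_eq_zero_iff_of_nonneg (fun j _ => hinner j)).mp key j
      (Finset.mem_univ j)
    have h2 := (Finset.sum_eq_zero_iff_of_nonneg (fun k _ => hnn j k)).mp h1 k
      (Finset.mem_univ k)
    rw [if_pos hjk] at h2
    have hcoslt := hcos j k hjk
    rcases mul_eq_zero.mp h2 with h | h
    · exact h
    · exfalso; linarith
  have hex : ∃ j : Fin N, p j ≠ 0 := by
    by_contra h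
    push_neg at h
    have : ∑ j, p j = 0 := Finset.sum_eq_zero (fun j _ => h j)
    rw [hnorm] at this; norm_num at this
  obtain ⟨j, hj⟩ := hex
  have hαj : α j ≠ 0 := by
    intro h; apply hj; simp [hp, h]
  refine ⟨j, hαj, ?_⟩
  intro y hy
  by_contra hne
  have hpy : p y ≠ 0 := by
    have h0 : ‖α y‖ ≠ 0 := by simpa using hy
    exact pow_ne_zero 2 h0
  have := hterm y j hne
  rcases mul_eq_zero.mp this with h | h
  · exact hpy h
  · exact hj h
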